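/- arXiv:2201.07086 — 3 statements merged into one kernel-verified Lean document; each statement's English description precedes it below -/
import Mathlib

section
/- The Nemytskii functional 𝓕 : L^{α'}(Ω;ℝ^d) → L¹(Ω), (𝓕(p))(x) = (ε/α')((1/ε)max{|p(x)|-w(x),0})^{α'}, is Gateaux differentiable with Gateaux derivative d𝓕(p;ψ) = ∫-free pointwise formula F(p)·ψ where F(p)(x) = ((|p(x)|-w(x))_+/ε)^{α'-1} p(x)/|p(x)|, and F maps L^{α'}(Ω;ℝ^d) into L^α(Ω;ℝ^d). -/
open MeasureTheory Filter
open scoped RealInnerProductSpace ENNReal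

section Aux

variable {E : Type*} [NormedAddCommGroup E] [InnerProductSpace ℝ E]

/-- Squeeze lemma: derivative 0 at 0 for `s ↦ (ε/α') ((1/ε) g s)^{α'}` when `g` grows
at most linearly and vanishes at `0`. -/
lemma aux_sq {ε α' : ℝ} (hε : 0 < ε) (hα' : 1 < α') {K : ℝ} (hK : 0 ≤ K)
    {g : ℝ → ℝ} (hg0 : g 0 = 0) (hg1 : ∀ s, 0 ≤ g s) (hg2 : ∀ s, g s ≤ |s| * K) :
    HasDerivAt (fun s => ε / α' * ((1 / ε) * g s) ^ α') 0 0 := by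
  have hα'0 : (0:ℝ) < α' := lt_trans one_pos hα'
  rw [hasDerivAt_iff_tendsto_slope]
  set c := ε / α' * ((1 / ε) * K) ^ α' with hc_def
  have hc : 0 ≤ c := by positivity
  apply squeeze_zero_norm' (a := fun s => c * |s| ^ (α' - 1))
  · filter_upwards [self_mem_nhdsWithin] with s hs
    have hs0 : s ≠ 0 := hs
    have habs : 0 < |s| := abs_pos.mpr hs0
    have hf0 : ε / α' * ((1 / ε) * g 0) ^ α' = 0 := by
      rw [hg0, mul_zero, Real.zero_rpow (ne_of_gt hα'0), mul_zero]
    rw [slope_def_field, hf0, sub_zero, sub_zero]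
    have hgs := hg1 s
    have hfs : 0 ≤ ε / α' * ((1 / ε) * g s) ^ α' := by positivity
    rw [Real.norm_eq_abs, abs_div, abs_of_nonneg hfs, div_le_iff₀ habs]
    have key : ε / α' * ((1 / ε) * g s) ^ α' ≤ c * |s| ^ α' := by
      have h1 : (1 / ε) * g s ≤ ((1 / ε) * K) * |s| := by
        calc (1 / ε) * g s ≤ (1 / ε) * (|s| * K) :=
              mul_le_mul_of_nonneg_left (hg2 s) (by positivity)
          _ = ((1 / ε) * K) * |s| := by ring
      have h2 : ((1 / ε) * g s) ^ α' ≤ (((1 / ε) * K) * |s|) ^ α' :=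
        Real.rpow_le_rpow (by positivity) h1 hα'0.le
      have h3 : (((1 / ε) * K) * |s|) ^ α' = ((1 / ε) * K) ^ α' * |s| ^ α' :=
        Real.mul_rpow (by positivity) (abs_nonneg s)
      calc ε / α' * ((1 / ε) * g s) ^ α' ≤ ε / α' * (((1 / ε) * K) * |s|) ^ α' :=
            mul_le_mul_of_nonneg_left h2 (by positivity)
        _ = c * |s| ^ α' := by rw [h3, hc_def]; ring
    calc ε / α' * ((1 / ε) * g s) ^ α' ≤ c * |s| ^ α' := key
      _ = c * |s| ^ (α' - 1) * |s| := by
          have habs2 : |s| ^ α' = |s| ^ (α' - 1) * |s| := by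
            rw [← Real.rpow_add_one (abs_ne_zero.mpr hs0) (α' - 1), sub_add_cancel]
          rw [habs2]; ring
  · have h1 : Tendsto (fun s : ℝ => |s| ^ (α' - 1)) (nhds 0) (nhds 0) := by
      have hcont : ContinuousAt (fun y : ℝ => y ^ (α' - 1)) 0 :=
        Real.continuousAt_rpow_const 0 (α' - 1) (Or.inr (by linarith))
      have h2 := hcont.tendsto.comp (continuous_abs.tendsto' 0 0 abs_zero)
      simpa [Function.comp_def, Real.zero_rpow (by linarith : α' - 1 ≠ 0)] using h2
    have h3 := (h1.const_mul c).mono_left (nhdsWithin_le_nhds (s := {(0:ℝ)}ᶜ))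
    simpa using h3

/-- Derivative of `Φ(s) = (ε/α') ((1/ε) max s 0)^{α'}` for `α' > 1`. -/
lemma aux_Phi {ε α' : ℝ} (hε : 0 < ε) (hα' : 1 < α') (r : ℝ) :
    HasDerivAt (fun s => ε / α' * ((1 / ε) * max s 0) ^ α')
      ((max r 0 / ε) ^ (α' - 1)) r := by
  have hα'0 : (0:ℝ) < α' := lt_trans one_pos hα'
  rcases lt_trichotomy r 0 with hr | hr | hr
  · have hval : (max r 0 / ε) ^ (α' - 1) = 0 := by
      rw [max_eq_right hr.le, zero_div, Real.zero_rpow (by linarith : α' - 1 ≠ 0)]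
    rw [hval]
    have heq : (fun s : ℝ => ε / α' * ((1 / ε) * max s 0) ^ α') =ᶠ[nhds r]
        fun _ : ℝ => (0:ℝ) := by
      filter_upwards [Iio_mem_nhds hr] with s hs
      rw [max_eq_right (le_of_lt hs), mul_zero, Real.zero_rpow (ne_of_gt hα'0), mul_zero]
    exact (hasDerivAt_const r 0).congr_of_eventuallyEq heq
  · subst hr
    have hval : (max (0:ℝ) 0 / ε) ^ (α' - 1) = 0 := by
      rw [max_self, zero_div, Real.zero_rpow (by linarith : α' - 1 ≠ 0)]
    rw [hval]
    exact aux_sq hε hα' zero_le_one (max_self 0) (fun s => le_max_right s 0)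
      (fun s => by rw [mul_one]; exact max_le (le_abs_self s) (abs_nonneg s))
  · have h1 : HasDerivAt (fun s : ℝ => (1 / ε) * s) (1 / ε) r := by
      simpa using (hasDerivAt_id r).const_mul (1 / ε)
    have h2 : HasDerivAt (fun y : ℝ => y ^ α') (α' * ((1 / ε) * r) ^ (α' - 1)) ((1 / ε) * r) :=
      Real.hasDerivAt_rpow_const (Or.inl (by positivity))
    have h3 := (h2.comp r h1).const_mul (ε / α')
    have heq : (fun s : ℝ => ε / α' * ((1 / ε) * max s 0) ^ α') =ᶠ[nhds r]
        fun s : ℝ => ε / α' * ((1 / ε) * s) ^ α' := by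
      filter_upwards [Ioi_mem_nhds hr] with s hs
      rw [max_eq_left (le_of_lt hs)]
    have hval : ε / α' * (α' * ((1 / ε) * r) ^ (α' - 1) * (1 / ε)) = (max r 0 / ε) ^ (α' - 1) := by
      rw [max_eq_left hr.le]
      have : (1 / ε) * r = r / ε := by ring
      rw [this]
      field_simp
    rw [← hval]
    exact HasDerivAt.congr_of_eventuallyEq h3 heq

/-- Derivative of the norm along a line, at a point where the vector is nonzero. -/
lemma aux_norm (v u : E) (hv : v ≠ 0) :
    HasDerivAt (fun t : ℝ => ‖v + t • u‖) ⟪‖v‖⁻¹ • v, u⟫ 0 := by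
  have hline : HasDerivAt (fun t : ℝ => v + t • u) u 0 := by
    simpa using ((hasDerivAt_id (0:ℝ)).smul_const u).const_add v
  have hnv : ‖v‖ ≠ 0 := norm_ne_zero_iff.mpr hv
  have hvv : ⟪v, v⟫ ≠ 0 := by
    rw [real_inner_self_eq_norm_mul_norm]
    exact mul_ne_zero hnv hnv
  have hinner := HasDerivAt.inner ℝ hline hline
  have hsqrt := Real.hasDerivAt_sqrt hvv
  simp only [zero_smul, add_zero] at hinner
  have hsqrt' : HasDerivAt (fun x => Real.sqrt x) (1 / (2 * Real.sqrt ⟪v, v⟫))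
      ⟪v + (0:ℝ) • u, v + (0:ℝ) • u⟫ := by simpa using hsqrt
  have hcomp := hsqrt'.comp (0:ℝ) hinner
  have hfun : (fun t : ℝ => Real.sqrt ⟪v + t • u, v + t • u⟫) =
      fun t : ℝ => ‖v + t • u‖ := by
    funext t
    rw [real_inner_self_eq_norm_mul_norm, Real.sqrt_mul_self (norm_nonneg _)]
  have hval : 1 / (2 * Real.sqrt ⟪v, v⟫) * (⟪v, u⟫ + ⟪u, v⟫) = ⟪‖v‖⁻¹ • v, u⟫ := by
    rw [real_inner_self_eq_norm_mul_norm, Real.sqrt_mul_self (norm_nonneg _),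
      real_inner_smul_left, real_inner_comm u v]
    field_simp
    ring
  rw [← hfun, ← hval]
  exact hcomp

/-- The main pointwise derivative lemma. -/
lemma aux_main {ε α' : ℝ} (hε : 0 < ε) (hα' : 1 < α') {c : ℝ} (hc : 0 ≤ c) (v u : E) :
    HasDerivAt (fun t : ℝ => ε / α' * ((1 / ε) * max (‖v + t • u‖ - c) 0) ^ α')
      ((max (‖v‖ - c) 0 / ε) ^ (α' - 1) * ⟪‖v‖⁻¹ • v, u⟫) 0 := by
  by_cases hv : v = 0
  · subst hv
    have h0 : ⟪‖(0:E)‖⁻¹ • (0:E), u⟫ = 0 := by simp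
    rw [h0, mul_zero]
    apply aux_sq hε hα' (norm_nonneg u) (g := fun t => max (‖(0:E) + t • u‖ - c) 0)
    · simp [max_eq_right, hc, neg_nonpos]
    · exact fun s => le_max_right _ _
    · intro s
      apply max_le
      · have : ‖(0:E) + s • u‖ = |s| * ‖u‖ := by simp [norm_smul]
        rw [this]
        linarith
      · positivity
  · have hn : HasDerivAt (fun t : ℝ => ‖v + t • u‖ - c) ⟪‖v‖⁻¹ • v, u⟫ 0 :=
      (aux_norm v u hv).sub_const c
    have hΦ := aux_Phi hε hα' (‖v‖ - c)
    have hΦ' : HasDerivAt (fun s => ε / α' * ((1 / ε) * max s 0) ^ α')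
        ((max (‖v‖ - c) 0 / ε) ^ (α' - 1)) ((fun t : ℝ => ‖v + t • u‖ - c) 0) := by
      simpa using hΦ
    have := hΦ'.comp 0 hn; exact this

end Aux

set_option maxHeartbeats 2000000 in
/-- The Nemytskii functional
`𝓕(p)(x) = (ε/α')((1/ε) max{|p(x)| - w(x), 0})^{α'}` mapping `L^{α'}(Ω;ℝ^d) → L¹(Ω)`
is Gateaux differentiable with derivative `ψ ↦ F(p)·ψ`, where
`F(p)(x) = ((|p(x)| - w(x))_+/ε)^{α'-1} p(x)/|p(x)|`, and `F` maps `L^{α'}(Ω;ℝ^d)`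
into `L^α(Ω;ℝ^d)`.  The difference quotients converge in `L¹(Ω)`. -/
theorem stmt7 (d : ℕ) (Ω : Set (EuclideanSpace ℝ (Fin d)))
    (hΩ : IsCompact Ω) (hΩ' : MeasurableSet Ω)
    (w : EuclideanSpace ℝ (Fin d) → ℝ) (hw : ContinuousOn w Ω) (hw0 : ∀ x ∈ Ω, 0 ≤ w x)
    (ε α α' : ℝ) (hε : 0 < ε) (hα : 1 < α) (hαd : α < d / (d - 1))
    (hconj : 1 / α + 1 / α' = 1)
    (p ψ : EuclideanSpace ℝ (Fin d) → EuclideanSpace ℝ (Fin d))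
    (hp : MemLp p (ENNReal.ofReal α') (volume.restrict Ω))
    (hψ : MemLp ψ (ENNReal.ofReal α') (volume.restrict Ω)) :
    MemLp (fun x => ((max (‖p x‖ - w x) 0 / ε) ^ (α' - 1)) • (‖p x‖⁻¹ • p x))
        (ENNReal.ofReal α) (volume.restrict Ω)
    ∧ Tendsto (fun t : ℝ =>
        eLpNorm (fun x =>
          ((ε / α') * ((1 / ε) * max (‖p x + t • ψ x‖ - w x) 0) ^ α'
            - (ε / α') * ((1 / ε) * max (‖p x‖ - w x) 0) ^ α') / t
          - ⟪((max (‖p x‖ - w x) 0 / ε) ^ (α' - 1)) • (‖p x‖⁻¹ • p x), ψ x⟫)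
          1 (volume.restrict Ω))
        (nhdsWithin 0 {0}ᶜ) (nhds 0) := by
  -- basic exponent arithmetic
  have hα0 : (0:ℝ) < α := by linarith
  have hia : 1 / α' = 1 - 1 / α := by linarith
  have hia_pos : 0 < 1 / α' := by
    rw [hia]
    have h1 : 1 / α < 1 := by rw [div_lt_one hα0]; exact hα
    linarith
  have hα'pos : 0 < α' := one_div_pos.mp hia_pos
  have hα'1 : 1 < α' := by
    have h1 : 1 / α' < 1 := by
      rw [hia]
      have h2 : 0 < 1 / α := by positivity
      linarith
    rwa [div_lt_one hα'pos] at h1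
  have hsub : 0 < α' - 1 := by linarith
  have hα'ne : α' ≠ 0 := ne_of_gt hα'pos
  have hαne : α ≠ 0 := ne_of_gt hα0
  have hconj' : α' + α = α * α' := by
    have h := hconj
    field_simp at h
    linarith
  have hprod : α * (α' - 1) = α' := by nlinarith [hconj']
  have hdiv : α' / (α' - 1) = α := by
    rw [eq_comm, eq_div_iff (by linarith : α' - 1 ≠ 0)]
    linarith [hprod]
  set μ := volume.restrict Ω with hμ_def
  have hmem : ∀ᵐ x ∂μ, x ∈ Ω := ae_restrict_mem hΩ'
  have hpm := hp.aestronglyMeasurable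
  have hψm := hψ.aestronglyMeasurable
  have hwm : AEMeasurable w μ := hw.aemeasurable hΩ'
  -- measurability of F
  have hFsm : AEStronglyMeasurable
      (fun x => ((max (‖p x‖ - w x) 0 / ε) ^ (α' - 1)) • (‖p x‖⁻¹ • p x)) μ := by
    apply AEStronglyMeasurable.smul (f := fun x => (max (‖p x‖ - w x) 0 / ε) ^ (α' - 1))
      (g := fun x => ‖p x‖⁻¹ • p x)
    · exact ((((hpm.norm.aemeasurable.sub hwm).max aemeasurable_const).div_const
        ε).pow_const (α' - 1)).aestronglyMeasurable
    · exact (hpm.norm.aemeasurable.inv.aestronglyMeasurable).smul hpm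
  -- `ofReal` arithmetic
  have hofReal : ENNReal.ofReal α' / ENNReal.ofReal (α' - 1) = ENNReal.ofReal α := by
    rw [← ENNReal.ofReal_div_of_pos hsub, hdiv]
  -- Part 1: F maps into L^α
  have hrp : MemLp (fun x => ‖p x‖ ^ (α' - 1)) (ENNReal.ofReal α) μ := by
    have h := hp.norm_rpow_div (ENNReal.ofReal (α' - 1))
    rwa [ENNReal.toReal_ofReal hsub.le, hofReal] at h
  have hgmem : MemLp (fun x => (‖p x‖ / ε) ^ (α' - 1)) (ENNReal.ofReal α) μ := by
    have h := hrp.const_mul ((ε ^ (α' - 1))⁻¹)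
    have he : (fun x => (ε ^ (α' - 1))⁻¹ * ‖p x‖ ^ (α' - 1))
        = fun x => (‖p x‖ / ε) ^ (α' - 1) := by
      funext x
      rw [Real.div_rpow (norm_nonneg _) hε.le, div_eq_mul_inv, mul_comm]
    rwa [he] at h
  have hunit_le : ∀ y : EuclideanSpace ℝ (Fin d), ‖‖y‖⁻¹ • y‖ ≤ 1 := by
    intro y
    rcases eq_or_ne y 0 with h | h
    · simp [h]
    · rw [norm_smul, norm_inv, norm_norm, inv_mul_cancel₀ (norm_ne_zero_iff.mpr h)]
  have hpart1 : MemLp (fun x => ((max (‖p x‖ - w x) 0 / ε) ^ (α' - 1)) • (‖p x‖⁻¹ • p x))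
      (ENNReal.ofReal α) μ := by
    refine hgmem.of_le hFsm ?_
    filter_upwards [hmem] with x hx
    have h1 : (0:ℝ) ≤ max (‖p x‖ - w x) 0 / ε := by positivity
    have hsc : (0:ℝ) ≤ (max (‖p x‖ - w x) 0 / ε) ^ (α' - 1) := Real.rpow_nonneg h1 _
    have hmax : max (‖p x‖ - w x) 0 ≤ ‖p x‖ :=
      max_le (sub_le_self _ (hw0 x hx)) (norm_nonneg _)
    have hsc2 : (max (‖p x‖ - w x) 0 / ε) ^ (α' - 1) ≤ (‖p x‖ / ε) ^ (α' - 1) :=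
      Real.rpow_le_rpow h1 (by gcongr) hsub.le
    calc ‖((max (‖p x‖ - w x) 0 / ε) ^ (α' - 1)) • (‖p x‖⁻¹ • p x)‖
        = (max (‖p x‖ - w x) 0 / ε) ^ (α' - 1) * ‖‖p x‖⁻¹ • p x‖ := by
          rw [norm_smul, Real.norm_eq_abs, abs_of_nonneg hsc]
      _ ≤ (max (‖p x‖ - w x) 0 / ε) ^ (α' - 1) * 1 :=
          mul_le_mul_of_nonneg_left (hunit_le _) hsc
      _ = (max (‖p x‖ - w x) 0 / ε) ^ (α' - 1) := mul_one _
      _ ≤ (‖p x‖ / ε) ^ (α' - 1) := hsc2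
      _ ≤ ‖(‖p x‖ / ε) ^ (α' - 1)‖ := le_abs_self _
  refine ⟨hpart1, ?_⟩
  -- Part 2: Gateaux differentiability (L¹ convergence of difference quotients)
  -- the dominating function
  set C : EuclideanSpace ℝ (Fin d) → ℝ :=
    fun x => ((‖p x‖ + ‖ψ x‖) / ε) ^ (α' - 1) * ‖ψ x‖ with hC_def
  have hC1 : MemLp (fun x => ‖p x‖ + ‖ψ x‖) (ENNReal.ofReal α') μ := hp.norm.add hψ.norm
  have hC2 : MemLp (fun x => ((‖p x‖ + ‖ψ x‖) / ε) ^ (α' - 1)) (ENNReal.ofReal α) μ := by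
    have h := hC1.norm_rpow_div (ENNReal.ofReal (α' - 1))
    rw [ENNReal.toReal_ofReal hsub.le, hofReal] at h
    have h2 := h.const_mul ((ε ^ (α' - 1))⁻¹)
    have he : (fun x => (ε ^ (α' - 1))⁻¹ * ‖‖p x‖ + ‖ψ x‖‖ ^ (α' - 1))
        = fun x => ((‖p x‖ + ‖ψ x‖) / ε) ^ (α' - 1) := by
      funext x
      rw [Real.norm_of_nonneg (by positivity), Real.div_rpow (by positivity) hε.le,
        div_eq_mul_inv, mul_comm]
    rwa [he] at h2
  have hpqr : (1:ℝ≥0∞) / 1 = 1 / ENNReal.ofReal α + 1 / ENNReal.ofReal α' := by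
    rw [show (1:ℝ≥0∞) / 1 = 1 by simp,
      show (1:ℝ≥0∞) / ENNReal.ofReal α = ENNReal.ofReal (1 / α) by
        rw [ENNReal.ofReal_div_of_pos hα0, ENNReal.ofReal_one],
      show (1:ℝ≥0∞) / ENNReal.ofReal α' = ENNReal.ofReal (1 / α') by
        rw [ENNReal.ofReal_div_of_pos hα'pos, ENNReal.ofReal_one],
      ← ENNReal.ofReal_add (by positivity) (by positivity), hconj, ENNReal.ofReal_one]
  have hCint : Integrable C μ := by
    rw [← memLp_one_iff_integrable]
    have h := MemLp.smul (r := 1) hψ.norm hC2 (hpqr := ⟨by simpa [one_div] using hpqr.symm⟩)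
    have he : ((fun x => ((‖p x‖ + ‖ψ x‖) / ε) ^ (α' - 1)) • fun x => ‖ψ x‖) = C := by
      funext x
      simp [hC_def]
    rwa [he] at h
  -- a.e. differentiability at every point
  have hx_deriv : ∀ᵐ x ∂μ, ∀ s : ℝ, HasDerivAt
      (fun t : ℝ => ε / α' * ((1 / ε) * max (‖p x + t • ψ x‖ - w x) 0) ^ α')
      ((max (‖p x + s • ψ x‖ - w x) 0 / ε) ^ (α' - 1)
        * ⟪‖p x + s • ψ x‖⁻¹ • (p x + s • ψ x), ψ x⟫) s := by
    filter_upwards [hmem] with x hx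
    intro s
    have h := aux_main hε hα'1 (hw0 x hx) (p x + s • ψ x) (ψ x)
    have h' : HasDerivAt
        (fun t : ℝ => ε / α' * ((1 / ε) * max (‖p x + s • ψ x + t • ψ x‖ - w x) 0) ^ α')
        ((max (‖p x + s • ψ x‖ - w x) 0 / ε) ^ (α' - 1)
          * ⟪‖p x + s • ψ x‖⁻¹ • (p x + s • ψ x), ψ x⟫) (s - s) := by
      rw [sub_self]; exact h
    have h2 := h'.comp_sub_const s s
    have hfun : ∀ t : ℝ, p x + s • ψ x + (t - s) • ψ x = p x + t • ψ x := by
      intro t; rw [sub_smul]; abel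
    simp only [hfun] at h2
    exact h2
  -- per-`t` domination
  have hkey : ∀ t : ℝ, |t| ≤ 1 → t ≠ 0 → ∀ᵐ x ∂μ,
      ‖((ε / α') * ((1 / ε) * max (‖p x + t • ψ x‖ - w x) 0) ^ α'
          - (ε / α') * ((1 / ε) * max (‖p x‖ - w x) 0) ^ α') / t
        - ⟪((max (‖p x‖ - w x) 0 / ε) ^ (α' - 1)) • (‖p x‖⁻¹ • p x), ψ x⟫‖ ≤ 2 * C x := by
    intro t ht1 ht0
    filter_upwards [hmem, hx_deriv] with x hx hder
    have hDbound : ∀ s : ℝ, |s| ≤ 1 →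
        ‖(max (‖p x + s • ψ x‖ - w x) 0 / ε) ^ (α' - 1)
          * ⟪‖p x + s • ψ x‖⁻¹ • (p x + s • ψ x), ψ x⟫‖ ≤ C x := by
      intro s hs
      have hb : max (‖p x + s • ψ x‖ - w x) 0 ≤ ‖p x‖ + ‖ψ x‖ := by
        apply max_le _ (by positivity)
        have h1 : ‖p x + s • ψ x‖ ≤ ‖p x‖ + ‖s • ψ x‖ := norm_add_le _ _
        have h2 : ‖s • ψ x‖ ≤ ‖ψ x‖ := by
          rw [norm_smul, Real.norm_eq_abs]
          exact mul_le_of_le_one_left (norm_nonneg _) hs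
        have h3 := hw0 x hx
        linarith
      have hD1 : (max (‖p x + s • ψ x‖ - w x) 0 / ε) ^ (α' - 1)
          ≤ ((‖p x‖ + ‖ψ x‖) / ε) ^ (α' - 1) :=
        Real.rpow_le_rpow (by positivity) (by gcongr) hsub.le
      have hD2 : |⟪‖p x + s • ψ x‖⁻¹ • (p x + s • ψ x), ψ x⟫| ≤ ‖ψ x‖ := by
        calc |⟪‖p x + s • ψ x‖⁻¹ • (p x + s • ψ x), ψ x⟫|
            ≤ ‖‖p x + s • ψ x‖⁻¹ • (p x + s • ψ x)‖ * ‖ψ x‖ := abs_real_inner_le_norm _ _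
          _ ≤ 1 * ‖ψ x‖ := mul_le_mul_of_nonneg_right (hunit_le _) (norm_nonneg _)
          _ = ‖ψ x‖ := one_mul _
      have hnn : (0:ℝ) ≤ (max (‖p x + s • ψ x‖ - w x) 0 / ε) ^ (α' - 1) :=
        Real.rpow_nonneg (by positivity) _
      rw [Real.norm_eq_abs, abs_mul, abs_of_nonneg hnn, hC_def]
      exact mul_le_mul hD1 hD2 (abs_nonneg _) (by positivity)
    have h0mem : (0:ℝ) ∈ Set.Icc (-1:ℝ) 1 := by norm_num
    have htmem : t ∈ Set.Icc (-1:ℝ) 1 := by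
      rcases abs_le.mp ht1 with ⟨h1, h2⟩
      exact Set.mem_Icc.mpr ⟨h1, h2⟩
    have hmvt := Convex.norm_image_sub_le_of_norm_hasDerivWithin_le
      (f := fun t : ℝ => ε / α' * ((1 / ε) * max (‖p x + t • ψ x‖ - w x) 0) ^ α')
      (f' := fun s : ℝ => (max (‖p x + s • ψ x‖ - w x) 0 / ε) ^ (α' - 1)
        * ⟪‖p x + s • ψ x‖⁻¹ • (p x + s • ψ x), ψ x⟫)
      (fun s _ => (hder s).hasDerivWithinAt)
      (fun s hs => hDbound s (abs_le.mpr ⟨hs.1, hs.2⟩))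
      (convex_Icc _ _) h0mem htmem
    simp only [zero_smul, add_zero, sub_zero] at hmvt
    have hq1 : |(ε / α' * ((1 / ε) * max (‖p x + t • ψ x‖ - w x) 0) ^ α'
        - ε / α' * ((1 / ε) * max (‖p x‖ - w x) 0) ^ α') / t| ≤ C x := by
      rw [abs_div, div_le_iff₀ (abs_pos.mpr ht0)]
      calc |ε / α' * ((1 / ε) * max (‖p x + t • ψ x‖ - w x) 0) ^ α'
          - ε / α' * ((1 / ε) * max (‖p x‖ - w x) 0) ^ α'|
          ≤ C x * ‖t‖ := by
            rw [← Real.norm_eq_abs]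
            exact hmvt
        _ = C x * |t| := by rw [Real.norm_eq_abs]
    have hq2 : |⟪((max (‖p x‖ - w x) 0 / ε) ^ (α' - 1)) • (‖p x‖⁻¹ • p x), ψ x⟫| ≤ C x := by
      rw [real_inner_smul_left]
      have h := hDbound 0 (by norm_num)
      simp only [zero_smul, add_zero, Real.norm_eq_abs] at h
      exact h
    calc ‖((ε / α') * ((1 / ε) * max (‖p x + t • ψ x‖ - w x) 0) ^ α'
          - (ε / α') * ((1 / ε) * max (‖p x‖ - w x) 0) ^ α') / t
        - ⟪((max (‖p x‖ - w x) 0 / ε) ^ (α' - 1)) • (‖p x‖⁻¹ • p x), ψ x⟫‖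
        ≤ |((ε / α') * ((1 / ε) * max (‖p x + t • ψ x‖ - w x) 0) ^ α'
          - (ε / α') * ((1 / ε) * max (‖p x‖ - w x) 0) ^ α') / t|
          + |⟪((max (‖p x‖ - w x) 0 / ε) ^ (α' - 1)) • (‖p x‖⁻¹ • p x), ψ x⟫| := by
          rw [Real.norm_eq_abs]; exact abs_sub _ _
      _ ≤ C x + C x := add_le_add hq1 hq2
      _ = 2 * C x := by ring
  -- measurability of the difference quotients
  have hGmeas : ∀ t : ℝ, AEStronglyMeasurable
      (fun x => ε / α' * ((1 / ε) * max (‖p x + t • ψ x‖ - w x) 0) ^ α') μ := by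
    intro t
    have hn : AEMeasurable (fun x => ‖p x + t • ψ x‖) μ :=
      (hpm.add (hψm.const_smul t)).norm.aemeasurable
    exact (((((hn.sub hwm).max aemeasurable_const).const_mul
      (1 / ε)).pow_const α').const_mul (ε / α')).aestronglyMeasurable
  have hG0meas : AEStronglyMeasurable
      (fun x => ε / α' * ((1 / ε) * max (‖p x‖ - w x) 0) ^ α') μ := by
    exact (((((hpm.norm.aemeasurable.sub hwm).max aemeasurable_const).const_mul
      (1 / ε)).pow_const α').const_mul (ε / α')).aestronglyMeasurable
  have hQmeas : ∀ t : ℝ, AEStronglyMeasurable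
      (fun x => ((ε / α') * ((1 / ε) * max (‖p x + t • ψ x‖ - w x) 0) ^ α'
          - (ε / α') * ((1 / ε) * max (‖p x‖ - w x) 0) ^ α') / t
        - ⟪((max (‖p x‖ - w x) 0 / ε) ^ (α' - 1)) • (‖p x‖⁻¹ • p x), ψ x⟫) μ := by
    intro t
    exact ((((hGmeas t).sub hG0meas).aemeasurable.div_const t).sub
      (hFsm.inner hψm).aemeasurable).aestronglyMeasurable
  -- pointwise convergence of the difference quotients
  have hlim : ∀ᵐ x ∂μ, Tendsto (fun t : ℝ =>
      ‖((ε / α') * ((1 / ε) * max (‖p x + t • ψ x‖ - w x) 0) ^ α'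
          - (ε / α') * ((1 / ε) * max (‖p x‖ - w x) 0) ^ α') / t
        - ⟪((max (‖p x‖ - w x) 0 / ε) ^ (α' - 1)) • (‖p x‖⁻¹ • p x), ψ x⟫‖)
      (nhdsWithin 0 {0}ᶜ) (nhds 0) := by
    filter_upwards [hx_deriv] with x hder
    have h0 := hder 0
    simp only [zero_smul, add_zero] at h0
    have hslope := hasDerivAt_iff_tendsto_slope.mp h0
    have h2 : Tendsto (fun t : ℝ =>
        slope (fun t : ℝ => ε / α' * ((1 / ε) * max (‖p x + t • ψ x‖ - w x) 0) ^ α') 0 t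
          - (max (‖p x‖ - w x) 0 / ε) ^ (α' - 1) * ⟪‖p x‖⁻¹ • p x, ψ x⟫)
        (nhdsWithin 0 {0}ᶜ) (nhds 0) := by
      have := hslope.sub_const
        ((max (‖p x‖ - w x) 0 / ε) ^ (α' - 1) * ⟪‖p x‖⁻¹ • p x, ψ x⟫)
      simpa using this
    have h3 : (fun t : ℝ =>
        ((ε / α') * ((1 / ε) * max (‖p x + t • ψ x‖ - w x) 0) ^ α'
          - (ε / α') * ((1 / ε) * max (‖p x‖ - w x) 0) ^ α') / t
        - ⟪((max (‖p x‖ - w x) 0 / ε) ^ (α' - 1)) • (‖p x‖⁻¹ • p x), ψ x⟫)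
        =ᶠ[nhdsWithin (0:ℝ) {0}ᶜ] (fun t : ℝ =>
        slope (fun t : ℝ => ε / α' * ((1 / ε) * max (‖p x + t • ψ x‖ - w x) 0) ^ α') 0 t
          - (max (‖p x‖ - w x) 0 / ε) ^ (α' - 1) * ⟪‖p x‖⁻¹ • p x, ψ x⟫) := by
      filter_upwards [eventually_mem_nhdsWithin] with t ht
      rw [slope_def_field, sub_zero, real_inner_smul_left]
      congr 2
      simp
    have h4 := (Tendsto.congr' h3.symm h2)
    have h5 := h4.norm
    simpa using h5
  -- dominated convergence
  have hDC := tendsto_integral_filter_of_dominated_convergence (μ := μ)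
    (l := nhdsWithin (0:ℝ) {0}ᶜ)
    (F := fun t : ℝ => fun x =>
      ‖((ε / α') * ((1 / ε) * max (‖p x + t • ψ x‖ - w x) 0) ^ α'
          - (ε / α') * ((1 / ε) * max (‖p x‖ - w x) 0) ^ α') / t
        - ⟪((max (‖p x‖ - w x) 0 / ε) ^ (α' - 1)) • (‖p x‖⁻¹ • p x), ψ x⟫‖)
    (f := fun _ => (0:ℝ)) (bound := fun x => 2 * C x)
    (Eventually.of_forall fun t => (hQmeas t).norm)
    ?_ (hCint.const_mul 2) ?_
  rotate_left
  · have hev1 : ∀ᶠ t : ℝ in nhdsWithin 0 {0}ᶜ, |t| ≤ 1 := by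
      apply Eventually.filter_mono nhdsWithin_le_nhds
      filter_upwards [Metric.closedBall_mem_nhds (0:ℝ) one_pos] with t ht
      simpa [Real.dist_eq] using ht
    filter_upwards [hev1, eventually_mem_nhdsWithin] with t ht1 ht0
    filter_upwards [hkey t ht1 ht0] with x hx
    rw [norm_norm]
    exact hx
  · filter_upwards [hlim] with x hx
    exact hx
  · -- conclude
    rw [MeasureTheory.integral_zero] at hDC
    have hofReal_cont : Tendsto (fun t : ℝ => ENNReal.ofReal
        (∫ x, ‖((ε / α') * ((1 / ε) * max (‖p x + t • ψ x‖ - w x) 0) ^ α'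
            - (ε / α') * ((1 / ε) * max (‖p x‖ - w x) 0) ^ α') / t
          - ⟪((max (‖p x‖ - w x) 0 / ε) ^ (α' - 1)) • (‖p x‖⁻¹ • p x), ψ x⟫‖ ∂μ))
        (nhdsWithin 0 {0}ᶜ) (nhds 0) := by
      have h := (ENNReal.continuous_ofReal.tendsto 0).comp hDC
      simpa [Function.comp_def] using h
    refine Tendsto.congr' ?_ hofReal_cont
    have hev1 : ∀ᶠ t : ℝ in nhdsWithin 0 {0}ᶜ, |t| ≤ 1 := by
      apply Eventually.filter_mono nhdsWithin_le_nhds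
      filter_upwards [Metric.closedBall_mem_nhds (0:ℝ) one_pos] with t ht
      simpa [Real.dist_eq] using ht
    filter_upwards [hev1, eventually_mem_nhdsWithin] with t ht1 ht0
    have hQint : Integrable (fun x =>
        ((ε / α') * ((1 / ε) * max (‖p x + t • ψ x‖ - w x) 0) ^ α'
          - (ε / α') * ((1 / ε) * max (‖p x‖ - w x) 0) ^ α') / t
        - ⟪((max (‖p x‖ - w x) 0 / ε) ^ (α' - 1)) • (‖p x‖⁻¹ • p x), ψ x⟫) μ :=
      Integrable.mono' (hCint.const_mul 2) (hQmeas t) (hkey t ht1 ht0)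
    rw [eLpNorm_one_eq_lintegral_enorm, ← ofReal_integral_norm_eq_lintegral_enorm hQint]
end

section
/- Let 𝓖(x,p) := (ε/α')((1/ε)max{|p|-w,0})^{α'} + δ max{|p|, w} + (δ/2) min{|p|²/w, w} with w = w(x) > 0. Then the Fenchel (convex) conjugate of 𝓖(x,·) is 𝓖*(x,q) = |q|²·w/(2δ) - δw if |q| ≤ δ, and 𝓖*(x,q) = (ε/α)(|q|-δ)^α - (3/2)δw + |q|w if |q| > δ. -/
open scoped RealInnerProductSpace

/-- The integrand `𝓖(x,·) = 𝓕(x,·) + 𝓡(x,·)` of the doubly regularized problem. -/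
noncomputable def calG {F : Type*} [NormedAddCommGroup F] (ε α' δ w : ℝ) (p : F) : ℝ :=
  (ε / α') * ((1 / ε) * max (‖p‖ - w) 0) ^ α'
    + δ * max ‖p‖ w + (δ / 2) * min (‖p‖ ^ 2 / w) w

/-- The claimed Fenchel conjugate of `𝓖(x,·)`. -/
noncomputable def calGstar {F : Type*} [NormedAddCommGroup F] (ε α δ w : ℝ) (q : F) : ℝ :=
  if ‖q‖ ≤ δ then ‖q‖ ^ 2 * w / (2 * δ) - δ * w
  else (ε / α) * (‖q‖ - δ) ^ α - (3 / 2) * (δ * w) + ‖q‖ * w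

/-- Scalar upper bound: the one-dimensional Fenchel-Young type inequality. -/
lemma key_le (ε α α' δ w : ℝ) (hε : 0 < ε) (hδ : 0 < δ) (hw : 0 < w)
    (hα : 1 < α) (hconj : α' = α / (α - 1)) {s r : ℝ} (hs : 0 ≤ s) (hr : 0 ≤ r) :
    s * r - ((ε / α') * ((1 / ε) * max (r - w) 0) ^ α' + δ * max r w + (δ / 2) * min (r ^ 2 / w) w)
      ≤ (if s ≤ δ then s ^ 2 * w / (2 * δ) - δ * w
         else (ε / α) * (s - δ) ^ α - (3 / 2) * (δ * w) + s * w) := by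
  have hcj : α.HolderConjugate α' := by
    rw [hconj]; exact Real.HolderConjugate.conjExponent hα
  have hα'1 : 1 < α' := hcj.symm.lt
  have hα'0 : α' ≠ 0 := by positivity
  split_ifs with hsδ
  · rcases le_total r w with hrw | hrw
    · rw [max_eq_right (sub_nonpos.2 hrw), max_eq_right hrw,
        min_eq_left (by rw [div_le_iff₀ hw]; nlinarith), mul_zero, Real.zero_rpow hα'0, mul_zero]
      have key : s * r - δ / 2 * (r ^ 2 / w) ≤ s ^ 2 * w / (2 * δ) := by
        have h2 : (s * r - δ / 2 * (r ^ 2 / w)) * (2 * δ * w) ≤ s ^ 2 * w / (2 * δ) * (2 * δ * w) := by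
          have e1 : δ / 2 * (r ^ 2 / w) * (2 * δ * w) = δ ^ 2 * r ^ 2 := by field_simp
          have e2 : s ^ 2 * w / (2 * δ) * (2 * δ * w) = s ^ 2 * w ^ 2 := by field_simp
          rw [sub_mul, e1, e2]; nlinarith [sq_nonneg (s * w - δ * r)]
        exact le_of_mul_le_mul_right h2 (by positivity)
      linarith
    · rw [max_eq_left (sub_nonneg.2 hrw), max_eq_left hrw,
        min_eq_right (by rw [le_div_iff₀ hw]; nlinarith)]
      have hu : 0 ≤ (1 / ε) * (r - w) := mul_nonneg (by positivity) (sub_nonneg.2 hrw)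
      have h0 : 0 ≤ (ε / α') * ((1 / ε) * (r - w)) ^ α' :=
        mul_nonneg (by positivity) (Real.rpow_nonneg hu α')
      have hprod : 0 ≤ (δ - s) * (r - w) :=
        mul_nonneg (sub_nonneg.2 hsδ) (sub_nonneg.2 hrw)
      have hB : s * w - δ * w / 2 ≤ s ^ 2 * w / (2 * δ) := by
        rw [le_div_iff₀ (by positivity)]
        nlinarith [mul_nonneg (sq_nonneg (s - δ)) hw.le]
      nlinarith
  · push_neg at hsδ
    have ha : 0 < s - δ := sub_pos.2 hsδ
    have hA : 0 ≤ (ε / α) * (s - δ) ^ α :=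
      mul_nonneg (by positivity) (Real.rpow_nonneg ha.le α)
    rcases le_total r w with hrw | hrw
    · rw [max_eq_right (sub_nonpos.2 hrw), max_eq_right hrw,
        min_eq_left (by rw [div_le_iff₀ hw]; nlinarith), mul_zero, Real.zero_rpow hα'0, mul_zero]
      have f1 : 0 ≤ w - r := sub_nonneg.2 hrw
      have f2 : 0 ≤ 2 * s * w - δ * (w + r) := by nlinarith
      have key : s * r - δ / 2 * (r ^ 2 / w) ≤ s * w - δ * w / 2 := by
        have h2 : (s * r - δ / 2 * (r ^ 2 / w)) * (2 * w) ≤ (s * w - δ * w / 2) * (2 * w) := by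
          have e1 : δ / 2 * (r ^ 2 / w) * (2 * w) = δ * r ^ 2 := by field_simp
          rw [sub_mul, e1]; nlinarith [mul_nonneg f1 f2]
        exact le_of_mul_le_mul_right h2 (by positivity)
      linarith
    · rw [max_eq_left (sub_nonneg.2 hrw), max_eq_left hrw,
        min_eq_right (by rw [le_div_iff₀ hw]; nlinarith)]
      have hu : 0 ≤ (1 / ε) * (r - w) := mul_nonneg (by positivity) (sub_nonneg.2 hrw)
      have young := Real.young_inequality_of_nonneg ha.le hu hcj
      have hmul : (s - δ) * ((1 / ε) * (r - w)) * ε = (s - δ) * (r - w) := by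
        field_simp
      have young2 : (s - δ) * (r - w)
          ≤ ε / α * (s - δ) ^ α + ε / α' * ((1 / ε) * (r - w)) ^ α' := by
        have h := mul_le_mul_of_nonneg_right young hε.le
        rw [hmul] at h
        calc (s - δ) * (r - w)
            ≤ ((s - δ) ^ α / α + ((1 / ε) * (r - w)) ^ α' / α') * ε := h
          _ = ε / α * (s - δ) ^ α + ε / α' * ((1 / ε) * (r - w)) ^ α' := by ring
      linarith

/-- Scalar attainment: the supremum is attained at an explicit radius. -/
lemma key_eq (ε α α' δ w : ℝ) (hε : 0 < ε) (hδ : 0 < δ) (hw : 0 < w)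
    (hα : 1 < α) (hconj : α' = α / (α - 1)) {s : ℝ} (hs : 0 ≤ s) :
    ∃ r : ℝ, 0 ≤ r ∧
      s * r - ((ε / α') * ((1 / ε) * max (r - w) 0) ^ α' + δ * max r w + (δ / 2) * min (r ^ 2 / w) w)
        = (if s ≤ δ then s ^ 2 * w / (2 * δ) - δ * w
           else (ε / α) * (s - δ) ^ α - (3 / 2) * (δ * w) + s * w) := by
  have hcj : α.HolderConjugate α' := by
    rw [hconj]; exact Real.HolderConjugate.conjExponent hα
  have hα'1 : 1 < α' := hcj.symm.lt
  have hα'0 : α' ≠ 0 := by positivity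
  by_cases hsδ : s ≤ δ
  · refine ⟨s * w / δ, by positivity, ?_⟩
    rw [if_pos hsδ]
    have hrw : s * w / δ ≤ w := by
      rw [div_le_iff₀ hδ]; nlinarith
    have hr0 : 0 ≤ s * w / δ := by positivity
    rw [max_eq_right (sub_nonpos.2 hrw), max_eq_right hrw,
      min_eq_left (by rw [div_le_iff₀ hw]; nlinarith), mul_zero, Real.zero_rpow hα'0, mul_zero]
    field_simp
    ring
  · push_neg at hsδ
    have ha : 0 < s - δ := sub_pos.2 hsδ
    set a : ℝ := s - δ with hadef
    set t : ℝ := a ^ (α - 1) with htdef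
    have ht : 0 < t := Real.rpow_pos_of_pos ha _
    refine ⟨w + ε * t, by positivity, ?_⟩
    rw [if_neg (not_le.2 hsδ)]
    have hrw : w ≤ w + ε * t := by nlinarith
    have hr0 : (0:ℝ) ≤ w + ε * t := by positivity
    rw [max_eq_left (by linarith : 0 ≤ w + ε * t - w), max_eq_left hrw,
      min_eq_right (by rw [le_div_iff₀ hw]; nlinarith)]
    have hsimp : (1 / ε) * (w + ε * t - w) = t := by field_simp; ring
    rw [hsimp]
    have htα : t ^ α' = a ^ α := by
      rw [htdef, ← Real.rpow_mul ha.le, hcj.sub_one_mul_conj]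
    rw [htα]
    have hsum := hcj.inv_add_inv_eq_one
    have hα0 : α ≠ 0 := by positivity
    have haa : a ^ α = a * t := by
      have h := Real.rpow_add ha 1 (α - 1)
      rw [Real.rpow_one] at h
      have h1 : (1:ℝ) + (α - 1) = α := by ring
      rw [h1] at h
      exact h
    have h1 : s * (ε * t) - δ * (ε * t) = ε * a ^ α := by
      rw [haa]; ring
    have h2 : ε * a ^ α - (ε / α') * a ^ α = (ε / α) * a ^ α := by
      have hepn : ε - ε / α' = ε / α := by
        rw [div_eq_mul_inv, div_eq_mul_inv]
        linear_combination (-ε) * hsum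
      linear_combination a ^ α * hepn
    linear_combination h1 + h2

/-- The Fenchel conjugate of
`𝓖(x,p) = (ε/α')((1/ε) max{|p|-w,0})^{α'} + δ max{|p|,w} + (δ/2) min{|p|²/w, w}`
(with `w = w(x) > 0`) is `𝓖*(x,q) = |q|² w/(2δ) - δw` for `|q| ≤ δ` and
`(ε/α)(|q|-δ)^α - (3/2)δw + |q|w` for `|q| > δ`. -/
theorem stmt8 (d : ℕ) (ε α α' δ w : ℝ) (hε : 0 < ε) (hδ : 0 < δ) (hw : 0 < w)
    (hα : 1 < α) (hconj : α' = α / (α - 1)) (q : EuclideanSpace ℝ (Fin d)) :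
    (⨆ p : EuclideanSpace ℝ (Fin d), (⟪q, p⟫ - calG ε α' δ w p)) = calGstar ε α δ w q := by
  have hs : (0:ℝ) ≤ ‖q‖ := norm_nonneg q
  have upper : ∀ p : EuclideanSpace ℝ (Fin d),
      ⟪q, p⟫ - calG ε α' δ w p ≤ calGstar ε α δ w q := by
    intro p
    have h1 : ⟪q, p⟫ ≤ ‖q‖ * ‖p‖ := real_inner_le_norm q p
    have h2 := key_le ε α α' δ w hε hδ hw hα hconj hs (norm_nonneg p)
    simp only [calG, calGstar]
    refine le_trans ?_ h2
    have hG := le_refl ((ε / α') * ((1 / ε) * max (‖p‖ - w) 0) ^ α'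
      + δ * max ‖p‖ w + (δ / 2) * min (‖p‖ ^ 2 / w) w)
    linarith
  have bdd : BddAbove (Set.range fun p : EuclideanSpace ℝ (Fin d) =>
      ⟪q, p⟫ - calG ε α' δ w p) := ⟨calGstar ε α δ w q, by rintro _ ⟨p, rfl⟩; exact upper p⟩
  refine le_antisymm (ciSup_le upper) ?_
  obtain ⟨r, hr0, hreq⟩ := key_eq ε α α' δ w hε hδ hw hα hconj hs
  by_cases hq : q = 0
  · subst hq
    have hval : ⟪(0 : EuclideanSpace ℝ (Fin d)), (0 : EuclideanSpace ℝ (Fin d))⟫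
        - calG ε α' δ w (0 : EuclideanSpace ℝ (Fin d)) = calGstar ε α δ w (0 : EuclideanSpace ℝ (Fin d)) := by
      have hα'1 : 1 < α' := by
        rw [hconj]; exact (Real.HolderConjugate.conjExponent hα).symm.lt
      simp only [calG, calGstar, inner_zero_left, norm_zero]
      rw [max_eq_right (by linarith : (0:ℝ) - w ≤ 0), max_eq_right hw.le, mul_zero,
        Real.zero_rpow (by positivity), if_pos hδ.le]
      have : min ((0:ℝ) ^ 2 / w) w = 0 := by
        rw [show (0:ℝ) ^ 2 / w = 0 by simp, min_eq_left hw.le]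
      rw [this]
      ring
    rw [← hval]
    exact le_ciSup bdd 0
  · have hq' : 0 < ‖q‖ := norm_pos_iff.2 hq
    set p₀ : EuclideanSpace ℝ (Fin d) := (r / ‖q‖) • q with hp₀
    have hnp : ‖p₀‖ = r := by
      rw [hp₀, norm_smul, Real.norm_eq_abs, abs_of_nonneg (by positivity)]
      field_simp
    have hip : ⟪q, p₀⟫ = ‖q‖ * r := by
      rw [hp₀, real_inner_smul_right, real_inner_self_eq_norm_sq]
      field_simp
    have hval : ⟪q, p₀⟫ - calG ε α' δ w p₀ = calGstar ε α δ w q := by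
      simp only [calG, calGstar]
      rw [hip, hnp]
      exact hreq
    rw [← hval]
    exact le_ciSup bdd p₀
end

section
/- The map G(x,·) : ℝ^d → ℝ^d defined by G(x,p) = ((|p|-w)_+/ε)^{α'-1}·p/|p| + δp/max{|p|,w} (with w = w(x) > 0) is a bijection of ℝ^d with inverse given by z ↦ z·w/δ if |z| ≤ δ and z ↦ (z/|z|)(ε(|z|-δ)^{α-1} + w) if |z| > δ. -/
/-- The map `G(x,·) = F(x,·) + R(x,·)` from the regularized optimality system. -/
noncomputable def Gmap {F : Type*} [NormedAddCommGroup F] [NormedSpace ℝ F]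
    (ε α' δ w : ℝ) (p : F) : F :=
  ((max (‖p‖ - w) 0 / ε) ^ (α' - 1)) • (‖p‖⁻¹ • p) + (δ / max ‖p‖ w) • p

/-- The claimed inverse of `G(x,·)`. -/
noncomputable def GmapInv {F : Type*} [NormedAddCommGroup F] [NormedSpace ℝ F]
    (ε α δ w : ℝ) (z : F) : F :=
  if ‖z‖ ≤ δ then (w / δ) • z
  else (ε * (‖z‖ - δ) ^ (α - 1) + w) • (‖z‖⁻¹ • z)

lemma exponent_eq (α α' : ℝ) (hα : 1 < α) (hconj : α' = α / (α - 1)) :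
    α' - 1 = (α - 1)⁻¹ := by
  have h : α - 1 ≠ 0 := by linarith
  field_simp [hconj]
  rw [hconj, sub_mul, div_mul_cancel₀ _ h]; ring

lemma gmap_small {F : Type*} [NormedAddCommGroup F] [NormedSpace ℝ F]
    (ε α' δ w : ℝ) (hα' : α' - 1 ≠ 0) (p : F) (hp : ‖p‖ ≤ w) (hw : 0 < w) :
    Gmap ε α' δ w p = (δ / w) • p := by
  have h1 : max (‖p‖ - w) 0 = 0 := max_eq_right (by linarith)
  have h2 : max ‖p‖ w = w := max_eq_right hp
  simp [Gmap, h1, h2, Real.zero_rpow hα']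

lemma gmap_big {F : Type*} [NormedAddCommGroup F] [NormedSpace ℝ F]
    (ε α' δ w : ℝ) (p : F) (hp : w < ‖p‖) (hw : 0 < w) :
    Gmap ε α' δ w p
      = ((((‖p‖ - w) / ε) ^ (α' - 1) + δ) * ‖p‖⁻¹) • p := by
  have h1 : max (‖p‖ - w) 0 = ‖p‖ - w := max_eq_left (by linarith)
  have h2 : max ‖p‖ w = ‖p‖ := max_eq_left (le_of_lt hp)
  rw [Gmap, h1, h2, smul_smul, div_eq_mul_inv δ, add_mul, add_smul]

lemma left_inv {F : Type*} [NormedAddCommGroup F] [NormedSpace ℝ F]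
    (ε α α' δ w : ℝ) (hε : 0 < ε) (hδ : 0 < δ) (hw : 0 < w)
    (hα : 1 < α) (hconj : α' = α / (α - 1)) :
    Function.LeftInverse (GmapInv (F := F) ε α δ w) (Gmap ε α' δ w) := by
  have hα1 : (0:ℝ) < α - 1 := by linarith
  have hexp : α' - 1 = (α - 1)⁻¹ := exponent_eq α α' hα hconj
  have hα'ne : α' - 1 ≠ 0 := by rw [hexp]; positivity
  intro p
  rcases le_or_gt ‖p‖ w with hp | hp
  · rw [gmap_small ε α' δ w hα'ne p hp hw]
    have hn : ‖(δ / w) • p‖ = (δ / w) * ‖p‖ := by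
      rw [norm_smul, Real.norm_eq_abs, abs_of_pos (by positivity)]
    have hle : ‖(δ / w) • p‖ ≤ δ := by
      rw [hn]
      calc (δ / w) * ‖p‖ ≤ (δ / w) * w := by
            apply mul_le_mul_of_nonneg_left hp (by positivity)
        _ = δ := by field_simp
    rw [GmapInv, if_pos hle, smul_smul]
    have : w / δ * (δ / w) = 1 := by field_simp
    rw [this, one_smul]
  · have hpp : (0:ℝ) < ‖p‖ := lt_trans hw hp
    set t : ℝ := ((‖p‖ - w) / ε) ^ (α' - 1) with ht
    have htpos : 0 < t := Real.rpow_pos_of_pos (div_pos (by linarith) hε) _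
    rw [gmap_big ε α' δ w p hp hw]
    set c : ℝ := (t + δ) * ‖p‖⁻¹ with hc
    have hcpos : 0 < c := mul_pos (by linarith) (inv_pos.mpr hpp)
    have hn : ‖c • p‖ = t + δ := by
      rw [norm_smul, Real.norm_eq_abs, abs_of_pos hcpos, hc]
      field_simp
    have hgt : ¬ ‖c • p‖ ≤ δ := by rw [hn]; linarith
    rw [GmapInv, if_neg hgt, hn]
    have hkey : ε * (t + δ - δ) ^ (α - 1) + w = ‖p‖ := by
      have h0 : t + δ - δ = t := by ring
      rw [h0, ht]
      have : (((‖p‖ - w) / ε) ^ (α' - 1)) ^ (α - 1) = (‖p‖ - w) / ε := by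
        rw [← Real.rpow_mul (le_of_lt (div_pos (by linarith) hε)), hexp, inv_mul_cancel₀ (ne_of_gt hα1),
          Real.rpow_one]
      rw [this]
      field_simp
      ring
    rw [hkey, smul_smul, smul_smul]
    have h1 : ‖p‖ * (t + δ)⁻¹ * c = 1 := by
      rw [hc]; field_simp
    rw [h1, one_smul]

lemma right_inv {F : Type*} [NormedAddCommGroup F] [NormedSpace ℝ F]
    (ε α α' δ w : ℝ) (hε : 0 < ε) (hδ : 0 < δ) (hw : 0 < w)
    (hα : 1 < α) (hconj : α' = α / (α - 1)) :
    Function.RightInverse (GmapInv (F := F) ε α δ w) (Gmap ε α' δ w) := by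
  have hα1 : (0:ℝ) < α - 1 := by linarith
  have hexp : α' - 1 = (α - 1)⁻¹ := exponent_eq α α' hα hconj
  have hα'ne : α' - 1 ≠ 0 := by rw [hexp]; positivity
  intro z
  rcases le_or_gt ‖z‖ δ with hz | hz
  · rw [GmapInv, if_pos hz]
    have hn : ‖(w / δ) • z‖ = (w / δ) * ‖z‖ := by
      rw [norm_smul, Real.norm_eq_abs, abs_of_pos (by positivity)]
    have hle : ‖(w / δ) • z‖ ≤ w := by
      rw [hn]
      calc (w / δ) * ‖z‖ ≤ (w / δ) * δ := by
            apply mul_le_mul_of_nonneg_left hz (by positivity)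
        _ = w := by field_simp
    rw [gmap_small ε α' δ w hα'ne _ hle hw, smul_smul]
    have : δ / w * (w / δ) = 1 := by field_simp
    rw [this, one_smul]
  · rw [GmapInv, if_neg (not_le.mpr hz)]
    have hzpos : (0:ℝ) < ‖z‖ := lt_trans hδ hz
    set s : ℝ := ε * (‖z‖ - δ) ^ (α - 1) + w with hs
    have hrp : (0:ℝ) < (‖z‖ - δ) ^ (α - 1) := Real.rpow_pos_of_pos (by linarith) _
    have hspos : w < s := by rw [hs]; nlinarith
    set p : F := s • (‖z‖⁻¹ • z) with hp
    have hn : ‖p‖ = s := by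
      rw [hp, norm_smul, norm_smul, Real.norm_eq_abs, Real.norm_eq_abs,
        abs_of_pos (by linarith : (0:ℝ) < s), abs_of_pos (by positivity : (0:ℝ) < ‖z‖⁻¹)]
      field_simp
    have hgt : w < ‖p‖ := by rw [hn]; exact hspos
    rw [gmap_big ε α' δ w p hgt hw, hn]
    have hkey : ((s - w) / ε) ^ (α' - 1) = ‖z‖ - δ := by
      have h0 : (s - w) / ε = (‖z‖ - δ) ^ (α - 1) := by rw [hs]; field_simp; ring
      rw [h0, ← Real.rpow_mul (by linarith), hexp, mul_inv_cancel₀ (ne_of_gt hα1),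
        Real.rpow_one]
    rw [hkey, hp, smul_smul, smul_smul]
    have h1 : (‖z‖ - δ + δ) * s⁻¹ * s * ‖z‖⁻¹ = 1 := by
      have h2 : ‖z‖ - δ + δ = ‖z‖ := by ring
      rw [h2]; field_simp
      exact div_self (by linarith)
    rw [h1, one_smul]

/-- `G(x,p) = ((|p|-w)_+/ε)^{α'-1} p/|p| + δp/max{|p|,w}` (with
`w = w(x) > 0`) is a bijection of `ℝ^d` whose inverse is `z ↦ zw/δ` for `|z| ≤ δ` and
`z ↦ (z/|z|)(ε(|z|-δ)^{α-1} + w)` for `|z| > δ`. -/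
theorem stmt9 (d : ℕ) (ε α α' δ w : ℝ) (hε : 0 < ε) (hδ : 0 < δ) (hw : 0 < w)
    (hα : 1 < α) (hconj : α' = α / (α - 1)) :
    Function.Bijective (Gmap (F := EuclideanSpace ℝ (Fin d)) ε α' δ w)
    ∧ Function.LeftInverse (GmapInv (F := EuclideanSpace ℝ (Fin d)) ε α δ w)
        (Gmap ε α' δ w)
    ∧ Function.RightInverse (GmapInv (F := EuclideanSpace ℝ (Fin d)) ε α δ w)
        (Gmap ε α' δ w) := by
  have hl := left_inv (F := EuclideanSpace ℝ (Fin d)) ε α α' δ w hε hδ hw hα hconj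
  have hr := right_inv (F := EuclideanSpace ℝ (Fin d)) ε α α' δ w hε hδ hw hα hconj
  exact ⟨⟨hl.injective, hr.surjective⟩, hl, hr⟩
end
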